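/- Let p ≥ 2 and let x, y ∈ [-1,1]. Then (1/p)|x|^p + ((p-1)/p)|y|^p − |x||y|^{p-1} sign(xy) ≥ (1/(p·2^p)) |x − y|^p. -/

import Mathlib

open Real

private lemma mul_self_rpow {b q : ℝ} (hb : 0 ≤ b) (hq : 0 < q) :
    b ^ (q - 1) * b = b ^ q := by
  rcases hb.eq_or_lt with h | h
  · rw [← h, mul_zero, Real.zero_rpow hq.ne']
  · rw [← Real.rpow_add_one h.ne' (q - 1), sub_add_cancel]

private lemma bern {p a c : ℝ} (hp : 1 < p) (ha : 0 ≤ a) (hc : 0 ≤ c) :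
    c ^ p + p * c ^ (p - 1) * (a - c) ≤ a ^ p := by
  rcases hc.eq_or_lt with h | h
  · rw [← h, Real.zero_rpow (by linarith : p ≠ 0),
      Real.zero_rpow (sub_ne_zero.mpr hp.ne')]
    simpa using Real.rpow_nonneg ha p
  · have hs : -1 ≤ (a - c) / c := by
      rw [le_div_iff₀ h]; linarith
    have hbn := one_add_mul_self_le_rpow_one_add hs hp.le
    have h1 : (1 + (a - c) / c) = a / c := by field_simp; ring
    rw [h1, Real.div_rpow ha hc] at hbn
    have hcp : (0:ℝ) < c ^ p := Real.rpow_pos_of_pos h p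
    have hmul := mul_le_mul_of_nonneg_left hbn hcp.le
    have hc1 : c ^ (p - 1) * c = c ^ p := mul_self_rpow hc (by linarith)
    have hdiv : c ^ p / c = c ^ (p - 1) := by
      rw [← hc1]; field_simp
    have hkey : c ^ p * (1 + p * ((a - c) / c)) = c ^ p + p * c ^ (p - 1) * (a - c) := by
      rw [← hdiv]; field_simp
    rw [hkey] at hmul
    calc c ^ p + p * c ^ (p - 1) * (a - c) ≤ c ^ p * (a ^ p / c ^ p) := hmul
      _ = a ^ p := by field_simp

private lemma superadd {q u v : ℝ} (hq : 1 ≤ q) (hu : 0 ≤ u) (hv : 0 ≤ v) :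
    u ^ q + v ^ q ≤ (u + v) ^ q := by
  have hq0 : 0 < q := by linarith
  have h1 : u ^ q ≤ u * (u + v) ^ (q - 1) := by
    calc u ^ q = u ^ (q - 1) * u := (mul_self_rpow hu hq0).symm
      _ ≤ (u + v) ^ (q - 1) * u :=
        mul_le_mul_of_nonneg_right (Real.rpow_le_rpow hu (by linarith) (by linarith)) hu
      _ = u * (u + v) ^ (q - 1) := mul_comm _ _
  have h2 : v ^ q ≤ v * (u + v) ^ (q - 1) := by
    calc v ^ q = v ^ (q - 1) * v := (mul_self_rpow hv hq0).symm
      _ ≤ (u + v) ^ (q - 1) * v :=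
        mul_le_mul_of_nonneg_right (Real.rpow_le_rpow hv (by linarith) (by linarith)) hv
      _ = v * (u + v) ^ (q - 1) := mul_comm _ _
  have h3 : (u + v) ^ (q - 1) * (u + v) = (u + v) ^ q := mul_self_rpow (by linarith) hq0
  nlinarith [h1, h2, h3]

private lemma same_sign {p a b : ℝ} (hp : 2 ≤ p) (ha : 0 ≤ a) (hb : 0 ≤ b) :
    |a - b| ^ p / 2 ^ p ≤ a ^ p / p + (p - 1) / p * b ^ p - a * b ^ (p - 1) := by
  have hp0 : (0:ℝ) < p := by linarith
  have hp1 : (1:ℝ) < p := by linarith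
  set m : ℝ := (a + b) / 2 with hm
  have hm0 : 0 ≤ m := by positivity
  have h1 := bern hp1 ha hm0
  have h2 := bern hp1 hm0 hb
  have hbb : b ^ (p - 1) * b = b ^ p := mul_self_rpow hb hp0
  have hD : (m ^ (p-1) - b ^ (p-1)) * (a - b) / 2 ≤
      a ^ p / p + (p-1) / p * b ^ p - a * b ^ (p - 1) := by
    have hsum : b ^ p + p * b ^ (p-1) * ((a-b)/2) + p * m ^ (p-1) * ((a-b)/2) ≤ a ^ p := by
      have hma : m - b = (a - b) / 2 := by rw [hm]; ring
      have hmb : a - m = (a - b) / 2 := by rw [hm]; ring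
      rw [hma] at h2; rw [hmb] at h1
      linarith
    have hexp : a ^ p / p + (p-1) / p * b ^ p - a * b ^ (p - 1)
        = (a ^ p + (p-1) * b ^ p - p * a * b ^ (p-1)) / p := by
      field_simp
    rw [hexp, le_div_iff₀ hp0]
    have hbbp : p * (b ^ (p-1) * b) = p * b ^ p := by rw [hbb]
    nlinarith [hsum, hbbp]
  rcases le_total b a with hab | hab
  · have hse := superadd (by linarith : (1:ℝ) ≤ p - 1) hb (by linarith : (0:ℝ) ≤ (a-b)/2)
    have hmeq : b + (a - b) / 2 = m := by rw [hm]; ring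
    rw [hmeq] at hse
    have habs : |a - b| = a - b := abs_of_nonneg (by linarith)
    have h7 : (0:ℝ) ≤ (a-b)/2 := by linarith
    have hfin : ((a-b)/2) ^ (p-1) * ((a-b)/2) ≤ (m ^ (p-1) - b ^ (p-1)) * (a - b) / 2 := by
      have h6 : ((a-b)/2) ^ (p-1) ≤ m ^ (p-1) - b ^ (p-1) := by linarith
      nlinarith [mul_le_mul_of_nonneg_right h6 h7]
    have h8 : ((a-b)/2) ^ (p-1) * ((a-b)/2) = ((a-b)/2) ^ p := mul_self_rpow h7 hp0
    have h9 : ((a-b)/2) ^ p = (a-b) ^ p / 2 ^ p := Real.div_rpow (by linarith) (by norm_num) p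
    rw [habs]
    calc (a - b) ^ p / 2 ^ p = ((a-b)/2) ^ p := h9.symm
      _ = ((a-b)/2) ^ (p-1) * ((a-b)/2) := h8.symm
      _ ≤ (m ^ (p-1) - b ^ (p-1)) * (a - b) / 2 := hfin
      _ ≤ _ := hD
  · have hse := superadd (by linarith : (1:ℝ) ≤ p - 1) hm0 (by linarith : (0:ℝ) ≤ (b-a)/2)
    have hmeq : m + (b - a) / 2 = b := by rw [hm]; ring
    rw [hmeq] at hse
    have habs : |a - b| = b - a := by rw [abs_sub_comm]; exact abs_of_nonneg (by linarith)
    have h7 : (0:ℝ) ≤ (b-a)/2 := by linarith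
    have hfin : ((b-a)/2) ^ (p-1) * ((b-a)/2) ≤ (m ^ (p-1) - b ^ (p-1)) * (a - b) / 2 := by
      have h6 : ((b-a)/2) ^ (p-1) ≤ b ^ (p-1) - m ^ (p-1) := by linarith
      nlinarith [mul_le_mul_of_nonneg_right h6 h7]
    have h8 : ((b-a)/2) ^ (p-1) * ((b-a)/2) = ((b-a)/2) ^ p := mul_self_rpow h7 hp0
    have h9 : ((b-a)/2) ^ p = (b-a) ^ p / 2 ^ p := Real.div_rpow (by linarith) (by norm_num) p
    rw [habs]
    calc (b - a) ^ p / 2 ^ p = ((b-a)/2) ^ p := h9.symm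
      _ = ((b-a)/2) ^ (p-1) * ((b-a)/2) := h8.symm
      _ ≤ (m ^ (p-1) - b ^ (p-1)) * (a - b) / 2 := hfin
      _ ≤ _ := hD

private lemma opp_sign {p a b : ℝ} (hp : 2 ≤ p) (ha : 0 ≤ a) (hb : 0 ≤ b) :
    (a + b) ^ p / (p * 2 ^ p) ≤ a ^ p / p + (p - 1) / p * b ^ p + a * b ^ (p - 1) := by
  have hp0 : (0:ℝ) < p := by linarith
  have h2p : (0:ℝ) < 2 ^ p := Real.rpow_pos_of_pos (by norm_num) p
  have hap : (0:ℝ) ≤ a ^ p := Real.rpow_nonneg ha p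
  have hbp : (0:ℝ) ≤ b ^ p := Real.rpow_nonneg hb p
  have hmax : a + b ≤ 2 * max a b := by
    have := le_max_left a b; have := le_max_right a b; linarith
  have h1 : (a + b) ^ p ≤ (2 * max a b) ^ p :=
    Real.rpow_le_rpow (by linarith) hmax hp0.le
  have h2 : (2 * max a b) ^ p = 2 ^ p * (max a b) ^ p :=
    Real.mul_rpow (by norm_num) (le_max_of_le_left ha)
  have h3 : (max a b) ^ p ≤ a ^ p + b ^ p := by
    rcases le_total a b with h | h
    · rw [max_eq_right h]; linarith
    · rw [max_eq_left h]; linarith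
  have h4 : (a + b) ^ p ≤ 2 ^ p * (a ^ p + b ^ p) := by
    calc (a + b) ^ p ≤ 2 ^ p * (max a b) ^ p := by rw [← h2]; exact h1
      _ ≤ 2 ^ p * (a ^ p + b ^ p) := by nlinarith
  have h5 : (a + b) ^ p / (p * 2 ^ p) ≤ (a ^ p + b ^ p) / p := by
    rw [div_le_div_iff₀ (by positivity) hp0]
    nlinarith [h4, hp0, h2p]
  have h6 : (a ^ p + b ^ p) / p ≤ a ^ p / p + (p - 1) / p * b ^ p := by
    have hle : a ^ p + b ^ p ≤ a ^ p + (p - 1) * b ^ p := by nlinarith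
    calc (a ^ p + b ^ p) / p ≤ (a ^ p + (p - 1) * b ^ p) / p := by
          exact (div_le_div_iff_of_pos_right hp0).mpr hle
      _ = a ^ p / p + (p - 1) / p * b ^ p := by ring
  have h7 : 0 ≤ a * b ^ (p - 1) := by positivity
  linarith

/-- Scalar Bregman-divergence inequality for `p ≥ 2` and `x, y ∈ [-1, 1]`:
`(1/p)|x|^p + ((p-1)/p)|y|^p − |x||y|^{p-1} sign(xy) ≥ (1/(p·2^p)) |x − y|^p`. -/
theorem scalar_bregman_lower_bound_ge_two (p x y : ℝ) (hp : 2 ≤ p)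
    (hx : x ∈ Set.Icc (-1 : ℝ) 1) (hy : y ∈ Set.Icc (-1 : ℝ) 1) :
    (1 / (p * (2 : ℝ) ^ p)) * |x - y| ^ p ≤
      (1 / p) * |x| ^ p + ((p - 1) / p) * |y| ^ p
        - |x| * |y| ^ (p - 1) * Real.sign (x * y) := by
  have hp0 : (0:ℝ) < p := by linarith
  have h2p : (0:ℝ) < 2 ^ p := Real.rpow_pos_of_pos (by norm_num) p
  have ha : 0 ≤ |x| := abs_nonneg x
  have hb : 0 ≤ |y| := abs_nonneg y
  rcases lt_trichotomy (x * y) 0 with hxy | hxy | hxy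
  · -- opposite signs
    rw [Real.sign_of_neg hxy]
    have habs : |x - y| = |x| + |y| := by
      rcases lt_trichotomy x 0 with h | h | h
      · have hy' : 0 < y := by
          rcases lt_trichotomy y 0 with h' | h' | h'
          · nlinarith
          · rw [h', mul_zero] at hxy; exact absurd hxy (lt_irrefl 0)
          · exact h'
        rw [abs_of_neg h, abs_of_pos hy', abs_sub_comm, abs_of_pos (by linarith)]
        ring
      · rw [h, zero_mul] at hxy; exact absurd hxy (lt_irrefl 0)
      · have hy' : y < 0 := by
          rcases lt_trichotomy y 0 with h' | h' | h'
          · exact h'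
          · rw [h', mul_zero] at hxy; exact absurd hxy (lt_irrefl 0)
          · nlinarith
        rw [abs_of_pos h, abs_of_neg hy', abs_of_pos (by linarith)]
        ring
    rw [habs]
    have hmain := opp_sign hp ha hb
    calc (1 / (p * 2 ^ p)) * (|x| + |y|) ^ p = (|x| + |y|) ^ p / (p * 2 ^ p) := by ring
      _ ≤ |x| ^ p / p + (p - 1) / p * |y| ^ p + |x| * |y| ^ (p - 1) := hmain
      _ = (1 / p) * |x| ^ p + ((p - 1) / p) * |y| ^ p - |x| * |y| ^ (p - 1) * (-1) := by ring
  · -- zero case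
    rw [hxy, Real.sign_zero]
    have habs : |x - y| = |(|x| - |y|)| := by
      rcases mul_eq_zero.1 hxy with h | h <;> rw [h] <;> simp [abs_sub_comm, abs_abs]
    rw [habs]
    have hmain := same_sign hp ha hb
    have hXp : (0:ℝ) ≤ |(|x| - |y|)| ^ p := Real.rpow_nonneg (abs_nonneg _) p
    have h1 : (1:ℝ)/(p * 2 ^ p) ≤ 1/(2 ^ p) := by
      rw [div_le_div_iff₀ (by positivity) h2p]; nlinarith
    calc (1 / (p * 2 ^ p)) * |(|x| - |y|)| ^ p ≤ (1 / 2 ^ p) * |(|x| - |y|)| ^ p :=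
          mul_le_mul_of_nonneg_right h1 hXp
      _ = |(|x| - |y|)| ^ p / 2 ^ p := by ring
      _ ≤ |x| ^ p / p + (p - 1) / p * |y| ^ p - |x| * |y| ^ (p - 1) := hmain
      _ ≤ |x| ^ p / p + (p - 1) / p * |y| ^ p := by
          have h0 : 0 ≤ |x| * |y| ^ (p - 1) := by positivity
          linarith
      _ = (1 / p) * |x| ^ p + ((p - 1) / p) * |y| ^ p - |x| * |y| ^ (p - 1) * 0 := by ring
  · -- same sign
    rw [Real.sign_of_pos hxy]
    have habs : |x - y| = |(|x| - |y|)| := by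
      rcases lt_trichotomy x 0 with h | h | h
      · have hy' : y < 0 := by
          rcases lt_trichotomy y 0 with h' | h' | h'
          · exact h'
          · rw [h', mul_zero] at hxy; exact absurd hxy (lt_irrefl 0)
          · nlinarith
        rw [abs_of_neg h, abs_of_neg hy', abs_sub_comm]
        congr 1; ring
      · rw [h, zero_mul] at hxy; exact absurd hxy (lt_irrefl 0)
      · have hy' : 0 < y := by
          rcases lt_trichotomy y 0 with h' | h' | h'
          · nlinarith
          · rw [h', mul_zero] at hxy; exact absurd hxy (lt_irrefl 0)
          · exact h'
        rw [abs_of_pos h, abs_of_pos hy']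
    rw [habs]
    have hmain := same_sign hp ha hb
    have hXp : (0:ℝ) ≤ |(|x| - |y|)| ^ p := Real.rpow_nonneg (abs_nonneg _) p
    have h1 : (1:ℝ)/(p * 2 ^ p) ≤ 1/(2 ^ p) := by
      rw [div_le_div_iff₀ (by positivity) h2p]; nlinarith
    calc (1 / (p * 2 ^ p)) * |(|x| - |y|)| ^ p ≤ (1 / 2 ^ p) * |(|x| - |y|)| ^ p :=
          mul_le_mul_of_nonneg_right h1 hXp
      _ = |(|x| - |y|)| ^ p / 2 ^ p := by ring
      _ ≤ |x| ^ p / p + (p - 1) / p * |y| ^ p - |x| * |y| ^ (p - 1) := hmain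
      _ = (1 / p) * |x| ^ p + ((p - 1) / p) * |y| ^ p - |x| * |y| ^ (p - 1) * 1 := by ring
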